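/- Let (A,≺,≻) be a finite-dimensional pre-alternative algebra over a field of characteristic ≠ 2 equipped with a nondegenerate symmetric bilinear form h satisfying h(x≺y, z) = h(x, y≻z) for all x,y,z ∈ A. Define φ: A → A* by ⟨φ(x), y⟩ = h(x,y), let r ∈ A⊗A be symmetric, and set T̃_r = T_r∘φ: A → A. Then T̃_r(x)∘T̃_r(y) = T̃_r(T̃_r(x)≻y + x≺T̃_r(y)) for all x,y ∈ A (i.e., T̃_r is an Al-operator of the associated alternative algebra As(A) associated to the bimodule (A, l_≻, r_≺)) if and only if r is a symmetric solution of the PA-equations. In that case x≺'y = x≺T̃_r(y) and x≻'y = T̃_r(x)≻y define a pre-alternative algebra structure on A. -/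

import Mathlib

open TensorProduct

universe u v w

variable {k : Type u} [Field k]

section Defs

variable {M : Type v} {V : Type w} [AddCommGroup M] [Module k M] [AddCommGroup V] [Module k V]

/-- Alternative algebra: both alternative laws. -/
def IsAlt (m : M →ₗ[k] M →ₗ[k] M) : Prop :=
  (∀ x y : M, m (m x x) y = m x (m x y)) ∧ (∀ x y : M, m (m y x) x = m y (m x x))

/-- right associator -/
def rAssoc (p s : M →ₗ[k] M →ₗ[k] M) (x y z : M) : M :=
  p (p x y) z - p x (p y z + s y z)

/-- middle associator -/
def mAssoc (p s : M →ₗ[k] M →ₗ[k] M) (x y z : M) : M :=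
  p (s x y) z - s x (p y z)

/-- left associator -/
def lAssoc (p s : M →ₗ[k] M →ₗ[k] M) (x y z : M) : M :=
  s (p x y + s x y) z - s x (s y z)

/-- Pre-alternative algebra. -/
def IsPreAlt (p s : M →ₗ[k] M →ₗ[k] M) : Prop :=
  (∀ x y z : M, mAssoc p s x y z + rAssoc p s y x z = 0) ∧
  (∀ x y z : M, mAssoc p s x y z + lAssoc p s x z y = 0) ∧
  (∀ x y : M, rAssoc p s y x x = 0) ∧
  (∀ x y : M, lAssoc p s x x y = 0)

/-- Bimodule of an alternative algebra. -/
def IsAltBimod (m : M →ₗ[k] M →ₗ[k] M) (L R : M →ₗ[k] Module.End k V) : Prop :=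
  (∀ x : M, L (m x x) = L x * L x) ∧
  (∀ x : M, R (m x x) = R x * R x) ∧
  (∀ x y : M, R y * L x - L x * R y = R (m x y) - R y * R x) ∧
  (∀ x y : M, L (m y x) - L y * L x = L y * R x - R x * L y)

/-- Bimodule of a pre-alternative algebra. -/
def IsPreAltBimod (p s : M →ₗ[k] M →ₗ[k] M) (Lp Rp Ls Rs : M →ₗ[k] Module.End k V) : Prop :=
  (∀ x y : M, Ls ((p x y + s x y) + (p y x + s y x)) = Ls x * Ls y + Ls y * Ls x) ∧
  (∀ x y : M, Rs y * ((Lp x + Ls x) + (Rp x + Rs x)) = Ls x * Rs y + Rs (s x y)) ∧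
  (∀ x y : M, Rp y * Ls x + Rp y * Rp x = Ls x * Rp y + Rp (p x y + s x y)) ∧
  (∀ x y : M, Rp y * Rs x + Rp y * Lp x = Rs (p x y) + Lp x * (Rp y + Rs y)) ∧
  (∀ x y : M, Lp (s x y) + Lp (p y x) = Ls x * Lp y + Lp y * (Lp x + Ls x)) ∧
  (∀ x y : M, Ls (p y x + s y x) + Rp x * Ls y = Ls y * Ls x + Ls y * Rp x) ∧
  (∀ x y : M, Rs y * (Rp x + Rs x) + Rp x * Rs y = Rs (s x y) + Rs (p y x)) ∧
  (∀ x y : M, Rs x * (Lp y + Ls y) + Lp (s y x) = Ls y * Rs x + Ls y * Lp x) ∧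
  (∀ x y : M, Rp y * Rp x + Rp x * Rp y = Rp ((p x y + s x y) + (p y x + s y x))) ∧
  (∀ x y : M, Rp y * Lp x + Lp (p x y) = Lp x * ((Rp y + Rs y) + (Lp y + Ls y)))

/-- Dual family of endomorphisms: `(dualT L) x = (L x)^*`. -/
noncomputable def dualT (L : M →ₗ[k] Module.End k V) :
    M →ₗ[k] Module.End k (Module.Dual k V) :=
  (Module.Dual.transpose (R := k) (M := V) (M' := V)) ∘ₗ L

/-- The linear map `A* → A` associated to an element of `A ⊗ A`:
`⟨u* ⊗ v*, r⟩ = ⟨u*, T_r v*⟩`, i.e. `T_r(v*) = Σ v*(bᵢ) • aᵢ`. -/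
noncomputable def Tr : (M ⊗[k] M) →ₗ[k] Module.Dual k M →ₗ[k] M :=
  TensorProduct.lift (LinearMap.mk₂ k
    (fun a b => (Module.Dual.eval k M b).smulRight a)
    (fun a a' b => by ext f; simp)
    (fun c a b => by ext f; simp only [LinearMap.smulRight_apply, LinearMap.smul_apply,
      Module.Dual.eval_apply]; exact smul_comm _ _ _)
    (fun a b b' => by ext f; simp [add_smul])
    (fun c a b => by ext f; simp [map_smul, mul_smul]))

noncomputable def tlift (m : M →ₗ[k] M →ₗ[k] M) : M ⊗[k] M →ₗ[k] M := TensorProduct.lift m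

/-- `r₁₂ ⋄ r₁₃` : `(a⊗b)⊗(c⊗d) ↦ (a⋄c)⊗b⊗d`. -/
noncomputable def comp12_13 (m : M →ₗ[k] M →ₗ[k] M) :
    (M ⊗[k] M) ⊗[k] (M ⊗[k] M) →ₗ[k] M ⊗[k] (M ⊗[k] M) :=
  (TensorProduct.map (tlift m) LinearMap.id) ∘ₗ
    (TensorProduct.tensorTensorTensorComm k M M M M).toLinearMap

/-- `r₁₃ ⋄ r₁₂` : `(a⊗b)⊗(c⊗d) ↦ (a⋄c)⊗d⊗b`. -/
noncomputable def comp13_12 (m : M →ₗ[k] M →ₗ[k] M) :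
    (M ⊗[k] M) ⊗[k] (M ⊗[k] M) →ₗ[k] M ⊗[k] (M ⊗[k] M) :=
  (TensorProduct.map (tlift m) (TensorProduct.comm k M M).toLinearMap) ∘ₗ
    (TensorProduct.tensorTensorTensorComm k M M M M).toLinearMap

/-- `r₁₂ ⋄ r₂₃` : `(a⊗b)⊗(c⊗d) ↦ a⊗(b⋄c)⊗d`. -/
noncomputable def comp12_23 (m : M →ₗ[k] M →ₗ[k] M) :
    (M ⊗[k] M) ⊗[k] (M ⊗[k] M) →ₗ[k] M ⊗[k] (M ⊗[k] M) :=
  (TensorProduct.map LinearMap.id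
      ((TensorProduct.map (tlift m) LinearMap.id) ∘ₗ
        (TensorProduct.assoc k M M M).symm.toLinearMap)) ∘ₗ
    (TensorProduct.assoc k M M (M ⊗[k] M)).toLinearMap

/-- `r₂₃ ⋄ r₁₂` : `(a⊗b)⊗(c⊗d) ↦ c⊗(a⋄d)⊗b`. -/
noncomputable def comp23_12 (m : M →ₗ[k] M →ₗ[k] M) :
    (M ⊗[k] M) ⊗[k] (M ⊗[k] M) →ₗ[k] M ⊗[k] (M ⊗[k] M) :=
  (TensorProduct.map LinearMap.id
      ((TensorProduct.map (tlift m.flip) LinearMap.id) ∘ₗ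
        (TensorProduct.assoc k M M M).symm.toLinearMap)) ∘ₗ
    (TensorProduct.assoc k M M (M ⊗[k] M)).toLinearMap ∘ₗ
    (TensorProduct.comm k (M ⊗[k] M) (M ⊗[k] M)).toLinearMap

/-- `r₁₃ ⋄ r₂₃` : `(a⊗b)⊗(c⊗d) ↦ a⊗c⊗(b⋄d)`. -/
noncomputable def comp13_23 (m : M →ₗ[k] M →ₗ[k] M) :
    (M ⊗[k] M) ⊗[k] (M ⊗[k] M) →ₗ[k] M ⊗[k] (M ⊗[k] M) :=
  (TensorProduct.map LinearMap.id (TensorProduct.map LinearMap.id (tlift m))) ∘ₗ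
    (TensorProduct.assoc k M M (M ⊗[k] M)).toLinearMap ∘ₗ
    (TensorProduct.tensorTensorTensorComm k M M M M).toLinearMap

/-- `r₂₃ ⋄ r₁₃` : `(a⊗b)⊗(c⊗d) ↦ c⊗a⊗(b⋄d)`. -/
noncomputable def comp23_13 (m : M →ₗ[k] M →ₗ[k] M) :
    (M ⊗[k] M) ⊗[k] (M ⊗[k] M) →ₗ[k] M ⊗[k] (M ⊗[k] M) :=
  (TensorProduct.map LinearMap.id (TensorProduct.map LinearMap.id (tlift m))) ∘ₗ
    (TensorProduct.assoc k M M (M ⊗[k] M)).toLinearMap ∘ₗ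
    (TensorProduct.map (TensorProduct.comm k M M).toLinearMap LinearMap.id) ∘ₗ
    (TensorProduct.tensorTensorTensorComm k M M M M).toLinearMap

/-- The alternative Yang–Baxter expression `r₂₃∘r₁₂ − r₁₂∘r₁₃ − r₁₃∘r₂₃`. -/
noncomputable def ayb (m : M →ₗ[k] M →ₗ[k] M) (r : M ⊗[k] M) : M ⊗[k] (M ⊗[k] M) :=
  comp23_12 m (r ⊗ₜ r) - comp12_13 m (r ⊗ₜ r) - comp13_23 m (r ⊗ₜ r)

/-- PA-equations. -/
noncomputable def PA11 (p s : M →ₗ[k] M →ₗ[k] M) (r : M ⊗[k] M) : M ⊗[k] (M ⊗[k] M) :=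
  comp12_13 (p + s) (r ⊗ₜ r) - comp23_12 s (r ⊗ₜ r) - comp13_23 p (r ⊗ₜ r)

noncomputable def PA12 (p s : M →ₗ[k] M →ₗ[k] M) (r : M ⊗[k] M) : M ⊗[k] (M ⊗[k] M) :=
  comp13_12 (p + s) (r ⊗ₜ r) - comp12_23 p (r ⊗ₜ r) - comp23_13 s (r ⊗ₜ r)

noncomputable def PA21 (p s : M →ₗ[k] M →ₗ[k] M) (r : M ⊗[k] M) : M ⊗[k] (M ⊗[k] M) :=
  comp12_23 (p + s) (r ⊗ₜ r) - comp23_13 p (r ⊗ₜ r) - comp13_12 s (r ⊗ₜ r)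

noncomputable def PA22 (p s : M →ₗ[k] M →ₗ[k] M) (r : M ⊗[k] M) : M ⊗[k] (M ⊗[k] M) :=
  comp23_12 (p + s) (r ⊗ₜ r) - comp13_23 s (r ⊗ₜ r) - comp12_13 p (r ⊗ₜ r)

noncomputable def PA31 (p s : M →ₗ[k] M →ₗ[k] M) (r : M ⊗[k] M) : M ⊗[k] (M ⊗[k] M) :=
  comp13_23 (p + s) (r ⊗ₜ r) - comp12_13 s (r ⊗ₜ r) - comp23_12 p (r ⊗ₜ r)

noncomputable def PA32 (p s : M →ₗ[k] M →ₗ[k] M) (r : M ⊗[k] M) : M ⊗[k] (M ⊗[k] M) :=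
  comp23_13 (p + s) (r ⊗ₜ r) - comp13_12 p (r ⊗ₜ r) - comp12_23 s (r ⊗ₜ r)

/-- Semidirect sum product on `M × V` for an alternative algebra `M` and a bimodule `(V,L,R)`. -/
def sd (m : M →ₗ[k] M →ₗ[k] M) (L R : M →ₗ[k] Module.End k V) :
    (M × V) →ₗ[k] (M × V) →ₗ[k] (M × V) :=
  LinearMap.mk₂ k (fun x y => (m x.1 y.1, L x.1 y.2 + R y.1 x.2))
    (fun x x' y => by refine Prod.ext ?_ ?_ <;> simp [map_add] <;> abel)
    (fun c x y => by refine Prod.ext ?_ ?_ <;> simp [map_smul, smul_add])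
    (fun x y y' => by refine Prod.ext ?_ ?_ <;> simp [map_add] <;> abel)
    (fun c x y => by refine Prod.ext ?_ ?_ <;> simp [map_smul, smul_add])

end Defs
section MyAux
variable {A : Type v} [AddCommGroup A] [Module k A]

@[simp] lemma comp12_13_tmul (m : A →ₗ[k] A →ₗ[k] A) (a b c d : A) :
    comp12_13 m ((a ⊗ₜ[k] b) ⊗ₜ[k] (c ⊗ₜ[k] d)) = m a c ⊗ₜ[k] (b ⊗ₜ[k] d) := by
  simp [comp12_13, tlift]

@[simp] lemma comp13_12_tmul (m : A →ₗ[k] A →ₗ[k] A) (a b c d : A) :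
    comp13_12 m ((a ⊗ₜ[k] b) ⊗ₜ[k] (c ⊗ₜ[k] d)) = m a c ⊗ₜ[k] (d ⊗ₜ[k] b) := by
  simp [comp13_12, tlift]

@[simp] lemma comp12_23_tmul (m : A →ₗ[k] A →ₗ[k] A) (a b c d : A) :
    comp12_23 m ((a ⊗ₜ[k] b) ⊗ₜ[k] (c ⊗ₜ[k] d)) = a ⊗ₜ[k] (m b c ⊗ₜ[k] d) := by
  simp [comp12_23, tlift]

@[simp] lemma comp23_12_tmul (m : A →ₗ[k] A →ₗ[k] A) (a b c d : A) :
    comp23_12 m ((a ⊗ₜ[k] b) ⊗ₜ[k] (c ⊗ₜ[k] d)) = c ⊗ₜ[k] (m a d ⊗ₜ[k] b) := by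
  simp [comp23_12, tlift]

@[simp] lemma comp13_23_tmul (m : A →ₗ[k] A →ₗ[k] A) (a b c d : A) :
    comp13_23 m ((a ⊗ₜ[k] b) ⊗ₜ[k] (c ⊗ₜ[k] d)) = a ⊗ₜ[k] (c ⊗ₜ[k] m b d) := by
  simp [comp13_23, tlift]

@[simp] lemma comp23_13_tmul (m : A →ₗ[k] A →ₗ[k] A) (a b c d : A) :
    comp23_13 m ((a ⊗ₜ[k] b) ⊗ₜ[k] (c ⊗ₜ[k] d)) = c ⊗ₜ[k] (a ⊗ₜ[k] m b d) := by
  simp [comp23_13, tlift]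

@[simp] lemma Tr_tmul (a b : A) (f : Module.Dual k A) : Tr (a ⊗ₜ[k] b) f = f b • a := by
  simp [Tr]

end MyAux
section MyAux3
variable {A : Type v} [AddCommGroup A] [Module k A]
variable (hB : A →ₗ[k] Module.Dual k A)

lemma hB_m_expand (m : A →ₗ[k] A →ₗ[k] A) (w : A) (S : Finset (A × A))
    (c d : A × A → k) (uu vv : A × A → A) :
    hB w (m (∑ i ∈ S, c i • uu i) (∑ j ∈ S, d j • vv j)) =
      ∑ i ∈ S, ∑ j ∈ S, c i * (d j * hB w (m (uu i) (vv j))) := by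
  simp only [map_sum, map_smul, LinearMap.coe_sum, Finset.sum_apply,
    LinearMap.smul_apply, smul_eq_mul, Finset.mul_sum]
  rw [Finset.sum_comm]
  exact Finset.sum_congr rfl fun i _ => Finset.sum_congr rfl fun j _ => by ring
end MyAux3
section MyAux2
variable {A : Type v} [AddCommGroup A] [Module k A]

noncomputable def phi3 (hB : A →ₗ[k] Module.Dual k A) (x y z : A) :
    A ⊗[k] (A ⊗[k] A) →ₗ[k] k :=
  TensorProduct.dualDistrib k A (A ⊗[k] A)
    (hB x ⊗ₜ TensorProduct.dualDistrib k A A (hB y ⊗ₜ hB z))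

@[simp] lemma phi3_tmul (hB : A →ₗ[k] Module.Dual k A) (x y z a b c : A) :
    phi3 hB x y z (a ⊗ₜ (b ⊗ₜ c)) = hB x a * (hB y b * hB z c) := by
  simp [phi3]

lemma sep [FiniteDimensional k A] (hB : A →ₗ[k] Module.Dual k A)
    (hsurj : Function.Surjective hB) (t : A ⊗[k] (A ⊗[k] A))
    (h : ∀ x y z : A, phi3 hB x y z t = 0) : t = 0 := by
  classical
  let b := Module.finBasis k A
  let B := b.tensorProduct (b.tensorProduct b)
  have key : ∀ (f g e : Module.Dual k A) i j l, f = b.coord i → g = b.coord j →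
      e = b.coord l → ∀ u : A ⊗[k] (A ⊗[k] A),
      TensorProduct.dualDistrib k A (A ⊗[k] A)
        (f ⊗ₜ TensorProduct.dualDistrib k A A (g ⊗ₜ e)) u = B.repr u (i, (j, l)) := by
    intro f g e i j l hf hg he u
    subst hf hg he
    induction u using TensorProduct.induction_on with
    | zero => simp
    | tmul a w =>
        induction w using TensorProduct.induction_on with
        | zero => simp
        | tmul bb cc =>
            simp only [dualDistrib_apply]
            simp [B, Module.Basis.tensorProduct_repr_tmul_apply, Module.Basis.coord_apply]
            ring
        | add w1 w2 ih1 ih2 =>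
            simp only [TensorProduct.tmul_add, map_add, Finsupp.add_apply, ih1, ih2]
    | add u1 u2 ih1 ih2 =>
        simp only [map_add, Finsupp.add_apply, ih1, ih2]
  have hrep : B.repr t = 0 := by
    ext idx
    obtain ⟨i, j, l⟩ := idx
    obtain ⟨x, hx⟩ := hsurj (b.coord i)
    obtain ⟨y, hy⟩ := hsurj (b.coord j)
    obtain ⟨z, hz⟩ := hsurj (b.coord l)
    have := key (hB x) (hB y) (hB z) i j l hx hy hz t
    rw [← this]
    simpa [phi3] using h x y z
  simpa using B.repr.map_eq_zero_iff.mp (by simpa using hrep)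

end MyAux2
section MyAux4
variable {A : Type v} [AddCommGroup A] [Module k A]
variable (hB : A →ₗ[k] Module.Dual k A)

lemma phi3_comp12_13 (m : A →ₗ[k] A →ₗ[k] A) (x y z : A) (S : Finset (A × A))
    (T : A →ₗ[k] A) (hT : ∀ v, T v = ∑ i ∈ S, hB v i.2 • i.1) :
    phi3 hB x y z (comp12_13 m ((∑ i ∈ S, i.1 ⊗ₜ[k] i.2) ⊗ₜ (∑ i ∈ S, i.1 ⊗ₜ[k] i.2))) =
      hB x (m (T y) (T z)) := by
  rw [hT, hT, hB_m_expand hB m x S (fun i => hB y i.2) (fun j => hB z j.2)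
    (fun i => i.1) (fun j => j.1), TensorProduct.sum_tmul]
  simp only [TensorProduct.tmul_sum, map_sum, comp12_13_tmul, phi3_tmul]
  exact Finset.sum_congr rfl fun i _ => Finset.sum_congr rfl fun j _ => by ring

lemma phi3_comp13_12 (m : A →ₗ[k] A →ₗ[k] A) (x y z : A) (S : Finset (A × A))
    (T : A →ₗ[k] A) (hT : ∀ v, T v = ∑ i ∈ S, hB v i.2 • i.1) :
    phi3 hB x y z (comp13_12 m ((∑ i ∈ S, i.1 ⊗ₜ[k] i.2) ⊗ₜ (∑ i ∈ S, i.1 ⊗ₜ[k] i.2))) =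
      hB x (m (T z) (T y)) := by
  rw [hT, hT, hB_m_expand hB m x S (fun i => hB z i.2) (fun j => hB y j.2)
    (fun i => i.1) (fun j => j.1), TensorProduct.sum_tmul]
  simp only [TensorProduct.tmul_sum, map_sum, comp13_12_tmul, phi3_tmul]
  exact Finset.sum_congr rfl fun i _ => Finset.sum_congr rfl fun j _ => by ring

lemma phi3_comp12_23 (m : A →ₗ[k] A →ₗ[k] A) (x y z : A) (S : Finset (A × A))
    (T : A →ₗ[k] A) (hT : ∀ v, T v = ∑ i ∈ S, hB v i.2 • i.1)
    (hT' : ∀ v, T v = ∑ i ∈ S, hB v i.1 • i.2) :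
    phi3 hB x y z (comp12_23 m ((∑ i ∈ S, i.1 ⊗ₜ[k] i.2) ⊗ₜ (∑ i ∈ S, i.1 ⊗ₜ[k] i.2))) =
      hB y (m (T x) (T z)) := by
  rw [hT' x, hT z, hB_m_expand hB m y S (fun i => hB x i.1) (fun j => hB z j.2)
    (fun i => i.2) (fun j => j.1), TensorProduct.sum_tmul]
  simp only [TensorProduct.tmul_sum, map_sum, comp12_23_tmul, phi3_tmul]
  exact Finset.sum_congr rfl fun i _ => Finset.sum_congr rfl fun j _ => by ring

lemma phi3_comp23_12 (m : A →ₗ[k] A →ₗ[k] A) (x y z : A) (S : Finset (A × A))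
    (T : A →ₗ[k] A) (hT : ∀ v, T v = ∑ i ∈ S, hB v i.2 • i.1)
    (hT' : ∀ v, T v = ∑ i ∈ S, hB v i.1 • i.2) :
    phi3 hB x y z (comp23_12 m ((∑ i ∈ S, i.1 ⊗ₜ[k] i.2) ⊗ₜ (∑ i ∈ S, i.1 ⊗ₜ[k] i.2))) =
      hB y (m (T z) (T x)) := by
  rw [hT z, hT' x, hB_m_expand hB m y S (fun i => hB z i.2) (fun j => hB x j.1)
    (fun i => i.1) (fun j => j.2), TensorProduct.sum_tmul]
  simp only [TensorProduct.tmul_sum, map_sum, comp23_12_tmul, phi3_tmul]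
  exact Finset.sum_congr rfl fun i _ => Finset.sum_congr rfl fun j _ => by ring

lemma phi3_comp13_23 (m : A →ₗ[k] A →ₗ[k] A) (x y z : A) (S : Finset (A × A))
    (T : A →ₗ[k] A) (hT' : ∀ v, T v = ∑ i ∈ S, hB v i.1 • i.2) :
    phi3 hB x y z (comp13_23 m ((∑ i ∈ S, i.1 ⊗ₜ[k] i.2) ⊗ₜ (∑ i ∈ S, i.1 ⊗ₜ[k] i.2))) =
      hB z (m (T x) (T y)) := by
  rw [hT' x, hT' y, hB_m_expand hB m z S (fun i => hB x i.1) (fun j => hB y j.1)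
    (fun i => i.2) (fun j => j.2), TensorProduct.sum_tmul]
  simp only [TensorProduct.tmul_sum, map_sum, comp13_23_tmul, phi3_tmul]

lemma phi3_comp23_13 (m : A →ₗ[k] A →ₗ[k] A) (x y z : A) (S : Finset (A × A))
    (T : A →ₗ[k] A) (hT' : ∀ v, T v = ∑ i ∈ S, hB v i.1 • i.2) :
    phi3 hB x y z (comp23_13 m ((∑ i ∈ S, i.1 ⊗ₜ[k] i.2) ⊗ₜ (∑ i ∈ S, i.1 ⊗ₜ[k] i.2))) =
      hB z (m (T y) (T x)) := by
  rw [hT' y, hT' x, hB_m_expand hB m z S (fun i => hB y i.1) (fun j => hB x j.1)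
    (fun i => i.2) (fun j => j.2), TensorProduct.sum_tmul]
  simp only [TensorProduct.tmul_sum, map_sum, comp23_13_tmul, phi3_tmul]
  exact Finset.sum_congr rfl fun i _ => Finset.sum_congr rfl fun j _ => by ring

end MyAux4
theorem stmt18 {A : Type v} [AddCommGroup A] [Module k A] [FiniteDimensional k A]
    (hchar : (2 : k) ≠ 0) (p s : A →ₗ[k] A →ₗ[k] A) (h : IsPreAlt p s)
    (hB : A →ₗ[k] Module.Dual k A)
    (hsymmB : ∀ x y, hB x y = hB y x)
    (hnondeg : ∀ x, (∀ y, hB x y = 0) → x = 0)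
    (hassoc : ∀ x y z : A, hB (p x y) z = hB x (s y z))
    (r : A ⊗[k] A) (hsymm : TensorProduct.comm k A A r = r) :
    ((∀ x y : A,
        (p + s) ((Tr r ∘ₗ hB) x) ((Tr r ∘ₗ hB) y) =
          (Tr r ∘ₗ hB) (s ((Tr r ∘ₗ hB) x) y + p x ((Tr r ∘ₗ hB) y))) ↔
      (PA11 p s r = 0 ∧ PA12 p s r = 0 ∧ PA21 p s r = 0 ∧
        PA22 p s r = 0 ∧ PA31 p s r = 0 ∧ PA32 p s r = 0)) ∧
    ((PA11 p s r = 0 ∧ PA12 p s r = 0 ∧ PA21 p s r = 0 ∧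
        PA22 p s r = 0 ∧ PA31 p s r = 0 ∧ PA32 p s r = 0) →
      IsPreAlt (p.compl₂ (Tr r ∘ₗ hB)) (s ∘ₗ (Tr r ∘ₗ hB))) := by
  classical
  set T : A →ₗ[k] A := Tr r ∘ₗ hB with hTdef
  obtain ⟨S, hS⟩ := TensorProduct.exists_finset r
  -- hB is bijective
  have hinj : Function.Injective hB := by
    intro a b hab
    have h0 : ∀ y, hB (a - b) y = 0 := by intro y; simp [map_sub, hab]
    exact sub_eq_zero.mp (hnondeg _ h0)
  have hsurj : Function.Surjective hB :=
    (LinearMap.injective_iff_surjective_of_finrank_eq_finrank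
      (Subspace.dual_finrank_eq (V := A)).symm).mp hinj
  -- T in coordinates
  have hT : ∀ v, T v = ∑ i ∈ S, hB v i.2 • i.1 := by
    intro v
    rw [hTdef, LinearMap.comp_apply, hS]
    simp only [map_sum, LinearMap.coe_sum, Finset.sum_apply, Tr_tmul]
  have hT' : ∀ v, T v = ∑ i ∈ S, hB v i.1 • i.2 := by
    intro v
    have hc : (∑ i ∈ S, i.2 ⊗ₜ[k] i.1) = r := by
      rw [← hsymm, hS]; simp [map_sum]
    rw [hTdef, LinearMap.comp_apply, ← hc]
    simp only [map_sum, LinearMap.coe_sum, Finset.sum_apply, Tr_tmul]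
  -- T is self-adjoint
  have adj : ∀ x w : A, hB (T x) w = hB x (T w) := by
    intro x w
    rw [hsymmB (T x) w, hT' x, hT w]
    simp only [map_sum, map_smul, smul_eq_mul, LinearMap.coe_sum, Finset.sum_apply,
      LinearMap.smul_apply]
    exact Finset.sum_congr rfl fun i _ => by ring
  -- the six pairing computations
  have phiPA11 : ∀ x y z : A, phi3 hB x y z (PA11 p s r) =
      hB x ((p + s) (T y) (T z) - T (s (T y) z + p y (T z))) := by
    intro x y z
    unfold PA11
    rw [hS]
    rw [map_sub, map_sub, phi3_comp12_13 hB (p + s) x y z S T hT,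
      phi3_comp23_12 hB s x y z S T hT hT', phi3_comp13_23 hB p x y z S T hT']
    have c1 : hB y (s (T z) (T x)) = hB x (T (p y (T z))) := by
      rw [← hassoc y (T z) (T x), hsymmB, adj, hsymmB]
    have c2 : hB z (p (T x) (T y)) = hB x (T (s (T y) z)) := by
      rw [hsymmB z, hassoc, adj, hsymmB]
    simp only [map_add, map_sub]
    rw [c1, c2]
    ring
  have phiPA12 : ∀ x y z : A, phi3 hB x y z (PA12 p s r) =
      hB x ((p + s) (T z) (T y) - T (s (T z) y + p z (T y))) := by
    intro x y z
    unfold PA12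
    rw [hS]
    rw [map_sub, map_sub, phi3_comp13_12 hB (p + s) x y z S T hT,
      phi3_comp12_23 hB p x y z S T hT hT', phi3_comp23_13 hB s x y z S T hT']
    have c1 : hB y (p (T x) (T z)) = hB x (T (s (T z) y)) := by
      rw [hsymmB y, hassoc, adj, hsymmB]
    have c2 : hB z (s (T y) (T x)) = hB x (T (p z (T y))) := by
      rw [← hassoc z (T y) (T x), hsymmB, adj, hsymmB]
    simp only [map_add, map_sub]
    rw [c1, c2]
    ring
  have phiPA21 : ∀ x y z : A, phi3 hB x y z (PA21 p s r) =
      hB y ((p + s) (T x) (T z) - T (s (T x) z + p x (T z))) := by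
    intro x y z
    unfold PA21
    rw [hS]
    rw [map_sub, map_sub, phi3_comp12_23 hB (p + s) x y z S T hT hT',
      phi3_comp23_13 hB p x y z S T hT', phi3_comp13_12 hB s x y z S T hT]
    have c1 : hB z (p (T y) (T x)) = hB y (T (s (T x) z)) := by
      rw [hsymmB z, hassoc, adj, hsymmB]
    have c2 : hB x (s (T z) (T y)) = hB y (T (p x (T z))) := by
      rw [← hassoc x (T z) (T y), hsymmB, adj, hsymmB]
    simp only [map_add, map_sub]
    rw [c1, c2]
    ring
  have phiPA22 : ∀ x y z : A, phi3 hB x y z (PA22 p s r) =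
      hB y ((p + s) (T z) (T x) - T (s (T z) x + p z (T x))) := by
    intro x y z
    unfold PA22
    rw [hS]
    rw [map_sub, map_sub, phi3_comp23_12 hB (p + s) x y z S T hT hT',
      phi3_comp13_23 hB s x y z S T hT', phi3_comp12_13 hB p x y z S T hT]
    have c1 : hB z (s (T x) (T y)) = hB y (T (p z (T x))) := by
      rw [← hassoc z (T x) (T y), hsymmB, adj, hsymmB]
    have c2 : hB x (p (T y) (T z)) = hB y (T (s (T z) x)) := by
      rw [hsymmB x, hassoc, adj, hsymmB]
    simp only [map_add, map_sub]
    rw [c1, c2]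
    ring
  have phiPA31 : ∀ x y z : A, phi3 hB x y z (PA31 p s r) =
      hB z ((p + s) (T x) (T y) - T (s (T x) y + p x (T y))) := by
    intro x y z
    unfold PA31
    rw [hS]
    rw [map_sub, map_sub, phi3_comp13_23 hB (p + s) x y z S T hT',
      phi3_comp12_13 hB s x y z S T hT, phi3_comp23_12 hB p x y z S T hT hT']
    have c1 : hB x (s (T y) (T z)) = hB z (T (p x (T y))) := by
      rw [← hassoc x (T y) (T z), hsymmB, adj, hsymmB]
    have c2 : hB y (p (T z) (T x)) = hB z (T (s (T x) y)) := by
      rw [hsymmB y, hassoc, adj, hsymmB]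
    simp only [map_add, map_sub]
    rw [c1, c2]
    ring
  have phiPA32 : ∀ x y z : A, phi3 hB x y z (PA32 p s r) =
      hB z ((p + s) (T y) (T x) - T (s (T y) x + p y (T x))) := by
    intro x y z
    unfold PA32
    rw [hS]
    rw [map_sub, map_sub, phi3_comp23_13 hB (p + s) x y z S T hT',
      phi3_comp13_12 hB p x y z S T hT, phi3_comp12_23 hB s x y z S T hT hT']
    have c1 : hB x (p (T z) (T y)) = hB z (T (s (T y) x)) := by
      rw [hsymmB x, hassoc, adj, hsymmB]
    have c2 : hB y (s (T x) (T z)) = hB z (T (p y (T x))) := by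
      rw [← hassoc y (T x) (T z), hsymmB, adj, hsymmB]
    simp only [map_add, map_sub]
    rw [c1, c2]
    ring
  -- operator identity from PA11
  have hop_of : PA11 p s r = 0 →
      ∀ x y : A, (p + s) (T x) (T y) = T (s (T x) y + p x (T y)) := by
    intro hPA x y
    have h0 : ∀ w : A, hB w ((p + s) (T x) (T y) - T (s (T x) y + p x (T y))) = 0 := by
      intro w
      have := phiPA11 w x y
      rw [hPA, map_zero] at this
      exact this.symm
    have h1 : ∀ u : A, hB ((p + s) (T x) (T y) - T (s (T x) y + p x (T y))) u = 0 := by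
      intro u; rw [hsymmB]; exact h0 u
    exact sub_eq_zero.mp (hnondeg _ h1)
  have PA_of : (∀ x y : A, (p + s) (T x) (T y) = T (s (T x) y + p x (T y))) →
      (PA11 p s r = 0 ∧ PA12 p s r = 0 ∧ PA21 p s r = 0 ∧
        PA22 p s r = 0 ∧ PA31 p s r = 0 ∧ PA32 p s r = 0) := by
    intro hop
    refine ⟨?_, ?_, ?_, ?_, ?_, ?_⟩ <;>
      refine sep hB hsurj _ fun x y z => ?_
    · rw [phiPA11 x y z, hop y z]; simp
    · rw [phiPA12 x y z, hop z y]; simp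
    · rw [phiPA21 x y z, hop x z]; simp
    · rw [phiPA22 x y z, hop z x]; simp
    · rw [phiPA31 x y z, hop x y]; simp
    · rw [phiPA32 x y z, hop y x]; simp
  constructor
  · exact ⟨PA_of, fun hPA => hop_of hPA.1⟩
  · intro hPA
    have hop := hop_of hPA.1
    obtain ⟨h1, h2, h3, h4⟩ := h
    have hp' : ∀ a b : A, p.compl₂ T a b = p a (T b) := fun a b => rfl
    have hs' : ∀ a b : A, (s ∘ₗ T) a b = s (T a) b := fun a b => rfl
    have hopT : ∀ a b : A, T (p a (T b) + s (T a) b) = p (T a) (T b) + s (T a) (T b) := by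
      intro a b
      rw [add_comm (p a (T b)) (s (T a) b), ← hop a b]
      simp [LinearMap.add_apply]
    have hr : ∀ x y z : A,
        rAssoc (p.compl₂ T) (s ∘ₗ T) x y z = rAssoc p s x (T y) (T z) := by
      intro x y z
      simp only [rAssoc, hp', hs']
      rw [hopT y z]
    have hm : ∀ x y z : A,
        mAssoc (p.compl₂ T) (s ∘ₗ T) x y z = mAssoc p s (T x) y (T z) := by
      intro x y z
      simp only [mAssoc, hp', hs']
    have hl : ∀ x y z : A,
        lAssoc (p.compl₂ T) (s ∘ₗ T) x y z = lAssoc p s (T x) (T y) z := by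
      intro x y z
      simp only [lAssoc, hp', hs']
      rw [hopT x y]
    refine ⟨fun x y z => ?_, fun x y z => ?_, fun x y => ?_, fun x y => ?_⟩
    · rw [hm, hr]; exact h1 (T x) y (T z)
    · rw [hm, hl]; exact h2 (T x) y (T z)
    · rw [hr]; exact h3 (T x) y
    · rw [hl]; exact h4 (T x) y
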